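/- Let f : ℝ × ℝ → ℝ be defined by f(x,t) = sin(x − t). Then for every natural number k, every real number c, and all x, t ∈ ℝ, ∂_t f(x,t) + (k:ℝ) · ∂_x f(x,t) + ((k:ℝ) − 1) · ∂_x³ f(x,t) + c · ( ∂_x² f(x,t) + ∂_x⁴ f(x,t) ) = 0. -/

import Mathlib

open Real

lemma d_sin (t : ℝ) : deriv (fun y : ℝ => Real.sin (y - t)) = fun y => Real.cos (y - t) := by
  funext y
  have : HasDerivAt (fun y : ℝ => Real.sin (y - t)) (Real.cos (y - t) * 1) y :=
    ((hasDerivAt_id' y).sub_const t).sin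
  simpa using this.deriv

lemma d_cos (t : ℝ) : deriv (fun y : ℝ => Real.cos (y - t)) = fun y => -Real.sin (y - t) := by
  funext y
  have : HasDerivAt (fun y : ℝ => Real.cos (y - t)) (-Real.sin (y - t) * 1) y :=
    ((hasDerivAt_id' y).sub_const t).cos
  simpa using this.deriv

lemma it1 (t : ℝ) : iteratedDeriv 1 (fun y : ℝ => Real.sin (y - t)) = fun y => Real.cos (y - t) := by
  rw [iteratedDeriv_one, d_sin]

lemma it2 (t : ℝ) : iteratedDeriv 2 (fun y : ℝ => Real.sin (y - t)) = fun y => -Real.sin (y - t) := by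
  rw [show (2:ℕ) = 1 + 1 from rfl, iteratedDeriv_succ, it1, d_cos]

lemma it3 (t : ℝ) : iteratedDeriv 3 (fun y : ℝ => Real.sin (y - t)) = fun y => -Real.cos (y - t) := by
  rw [show (3:ℕ) = 2 + 1 from rfl, iteratedDeriv_succ, it2]
  funext y
  rw [deriv.fun_neg, d_sin]

lemma it4 (t : ℝ) : iteratedDeriv 4 (fun y : ℝ => Real.sin (y - t)) = fun y => Real.sin (y - t) := by
  rw [show (4:ℕ) = 3 + 1 from rfl, iteratedDeriv_succ, it3]
  funext y
  rw [deriv.fun_neg, d_cos]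
  simp

/-- The traveling wave `f(x,t) = sin(x − t)` solves the infinite family of PDEs
`f_t + k f_x + (k−1) f_{xxx} + c (f_{xx} + f_{xxxx}) = 0` for every `k ∈ ℕ` and `c ∈ ℝ`. -/
theorem traveling_wave_solves_family
    (f : ℝ × ℝ → ℝ) (hf : ∀ x t : ℝ, f (x, t) = Real.sin (x - t)) :
    ∀ (k : ℕ) (c : ℝ) (x t : ℝ),
      deriv (fun s => f (x, s)) t
        + (k : ℝ) * iteratedDeriv 1 (fun y => f (y, t)) x
        + ((k : ℝ) - 1) * iteratedDeriv 3 (fun y => f (y, t)) x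
        + c * (iteratedDeriv 2 (fun y => f (y, t)) x
            + iteratedDeriv 4 (fun y => f (y, t)) x) = 0 := by
  intro k c x t
  have hx : (fun y => f (y, t)) = fun y : ℝ => Real.sin (y - t) := funext fun y => hf y t
  have ht : (fun s => f (x, s)) = fun s : ℝ => Real.sin (x - s) := funext fun s => hf x s
  have hdt : deriv (fun s : ℝ => Real.sin (x - s)) t = -Real.cos (x - t) := by
    have : HasDerivAt (fun s : ℝ => Real.sin (x - s)) (Real.cos (x - t) * (-1)) t :=
      (Real.hasDerivAt_sin (x - t)).comp t ((hasDerivAt_id t).const_sub x)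
    simpa using this.deriv
  rw [hx, ht, hdt, it1, it2, it3, it4]
  ring
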